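/- Let M be a valuated matroid on finite E with values in ℝ ∪ {∞} and w ∈ ℝ^E. No set of the form in_w(H), for H a valuated circuit of M, is contained in a basis of the initial matroid in_w(M); that is, every in_w(H) is dependent in in_w(M). -/

import Mathlib

/-- A valuated matroid of rank `r` on a finite ground set `E`, with values in `ℝ ∪ {∞}`:
a basis valuation function `p` on `binom(E,r)` (encoded as a function on all finsets which
is `∞` away from `r`-sets), not identically `∞`, satisfying the valuated basis exchange
axiom. -/
structure ValuatedMatroid (E : Type*) [DecidableEq E] [Fintype E] (r : ℕ) where
  p : Finset E → WithTop ℝ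
  card_of_ne_top : ∀ B : Finset E, p B ≠ ⊤ → B.card = r
  exists_ne_top : ∃ B : Finset E, p B ≠ ⊤
  exchange : ∀ A B : Finset E, A.card = r → B.card = r → ∀ a ∈ A \ B,
    ∃ b ∈ B \ A,
      p (insert b (A.erase a)) + p (insert a (B.erase b)) ≤ p A + p B

namespace ValuatedMatroid

variable {E : Type*} [DecidableEq E] [Fintype E] {r : ℕ}

/-- The shifted valuation `p_w(B) = p(B) − ∑_{e ∈ B} w_e`. -/
noncomputable def pw (M : ValuatedMatroid E r) (w : E → ℝ) (B : Finset E) : WithTop ℝ :=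
  M.p B + ((-(∑ e ∈ B, w e) : ℝ) : WithTop ℝ)

/-- The minimum of `p_w` over all subsets of `E` (equivalently over all `r`-subsets,
since `p` is `∞` elsewhere). -/
noncomputable def minVal (M : ValuatedMatroid E r) (w : E → ℝ) : WithTop ℝ :=
  (Finset.univ : Finset E).powerset.inf (M.pw w)

/-- `B` is a basis of the initial matroid `in_w(M)`: an `r`-subset minimizing `p_w`. -/
def IsInitBasis (M : ValuatedMatroid E r) (w : E → ℝ) (B : Finset E) : Prop :=
  B.card = r ∧ M.pw w B = M.minVal w

end ValuatedMatroid

namespace ValuatedMatroid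

variable {E : Type*} [DecidableEq E] [Fintype E] {r : ℕ}

/-- The fundamental circuit `H(B, e)` of `e` over a basis `B` of the underlying matroid:
`H(B,e)_{e'} = p(B ∪ e − e') − p(B)`. -/
noncomputable def fundCircuit (M : ValuatedMatroid E r) (B : Finset E) (e : E) :
    E → WithTop ℝ := fun e' =>
  M.p ((insert e B).erase e') + ((-(M.p B).untopD 0 : ℝ) : WithTop ℝ)

/-- A valuated circuit of `M`: a tropical scaling `λ ⊙ H(B, e)` of a fundamental
circuit over a basis `B` of the underlying matroid (`p(B) ≠ ∞`). -/
noncomputable def IsValuatedCircuit (M : ValuatedMatroid E r) (H : E → WithTop ℝ) : Prop :=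
  ∃ (B : Finset E) (e : E) (lam : ℝ), M.p B ≠ ⊤ ∧ e ∉ B ∧
    ∀ e', H e' = (lam : WithTop ℝ) + M.fundCircuit B e e'

/-- `in_w(H)`: the set of elements at which `H_e + w_e` is minimal. -/
def initSet (H : E → WithTop ℝ) (w : E → ℝ) : Set E :=
  {e | ∀ e', H e + (w e : WithTop ℝ) ≤ H e' + (w e' : WithTop ℝ)}

end ValuatedMatroid

open ValuatedMatroid

private lemma addShuffle (x y : WithTop ℝ) (a b : ℝ) :
    (x + ((a : ℝ) : WithTop ℝ)) + (y + ((b : ℝ) : WithTop ℝ))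
      = (x + y) + (((a + b : ℝ)) : WithTop ℝ) := by
  rw [WithTop.coe_add]; abel

/-- Any set's `pw` value is at least `minVal`. -/
lemma minVal_le {E : Type*} [DecidableEq E] [Fintype E] {r : ℕ}
    (M : ValuatedMatroid E r) (w : E → ℝ) (S : Finset E) :
    M.minVal w ≤ M.pw w S :=
  Finset.inf_le (Finset.mem_powerset.mpr (Finset.subset_univ S))

theorem initSet_circuit_dependent {E : Type*} [DecidableEq E] [Fintype E] {r : ℕ}
    (M : ValuatedMatroid E r) (w : E → ℝ) (H : E → WithTop ℝ)
    (hH : M.IsValuatedCircuit H) :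
    ¬ ∃ B : Finset E, M.IsInitBasis w B ∧ initSet H w ⊆ (B : Set E) := by
  rintro ⟨B, ⟨hBcard, hBmin⟩, hsub⟩
  obtain ⟨B', e, lam, hpB', heB', hHdef⟩ := hH
  obtain ⟨c, hc⟩ := WithTop.ne_top_iff_exists.mp hpB'
  have huntop : (M.p B').untopD 0 = c := by rw [← hc]; rfl
  set Ie := insert e B' with hIe
  have hB'card : B'.card = r := M.card_of_ne_top B' hpB'
  have hIecard : Ie.card = r + 1 := by
    rw [hIe, Finset.card_insert_of_notMem heB', hB'card]
  set S : ℝ := ∑ x ∈ Ie, w x with hS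
  -- the H values in terms of p
  have hHval : ∀ e', H e' = M.p (Ie.erase e') + ((lam - c : ℝ) : WithTop ℝ) := by
    intro e'
    rw [hHdef e', ValuatedMatroid.fundCircuit, huntop, ← hIe, ← add_assoc,
      add_comm (lam : WithTop ℝ), add_assoc, ← WithTop.coe_add]
    ring_nf
  -- H e is finite
  have hHe : H e = ((lam : ℝ) : WithTop ℝ) := by
    rw [hHval e, hIe, Finset.erase_insert heB', ← hc, ← WithTop.coe_add]
    norm_num
  -- translation between H + w and pw
  have htrans : ∀ e' ∈ Ie, H e' + ((w e' : ℝ) : WithTop ℝ)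
      = M.pw w (Ie.erase e') + ((lam - c + S : ℝ) : WithTop ℝ) := by
    intro e' he'
    rw [hHval e', ValuatedMatroid.pw]
    have hsum : ∑ x ∈ Ie.erase e', w x = S - w e' := by
      have := Finset.sum_erase_add Ie w he'
      linarith [this]
    rw [hsum, add_assoc, add_assoc, ← WithTop.coe_add, ← WithTop.coe_add]
    ring_nf
  -- find a minimizer f of H + w
  obtain ⟨f, -, hfmin⟩ := Finset.exists_min_image Finset.univ
    (fun e' => H e' + ((w e' : ℝ) : WithTop ℝ)) ⟨e, Finset.mem_univ e⟩
  have hfmin' : ∀ e', H f + (w f : WithTop ℝ) ≤ H e' + (w e' : WithTop ℝ) :=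
    fun e' => hfmin e' (Finset.mem_univ e')
  have hfinit : f ∈ initSet H w := hfmin'
  have hfB : f ∈ B := hsub hfinit
  -- H f is finite
  have hHf : H f ≠ ⊤ := by
    intro h
    have := hfmin' e
    rw [h, hHe, ← WithTop.coe_add] at this
    simp at this
  have hpAf : M.p (Ie.erase f) ≠ ⊤ := by
    intro h
    rw [hHval f, h] at hHf
    exact hHf rfl
  have hfIe : f ∈ Ie := by
    by_contra hfIe
    rw [Finset.erase_eq_of_notMem hfIe] at hpAf
    have := M.card_of_ne_top Ie hpAf
    omega
  have hAfcard : (Ie.erase f).card = r := by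
    rw [Finset.card_erase_of_mem hfIe, hIecard]
    omega
  -- apply the exchange axiom to B and Ie.erase f at f
  obtain ⟨b, hb, hex⟩ := M.exchange B (Ie.erase f) hBcard hAfcard f
    (Finset.mem_sdiff.mpr ⟨hfB, fun h => (Finset.notMem_erase f Ie) h⟩)
  have hbAf : b ∈ Ie.erase f := (Finset.mem_sdiff.mp hb).1
  have hbB : b ∉ B := (Finset.mem_sdiff.mp hb).2
  have hbIe : b ∈ Ie := Finset.mem_of_mem_erase hbAf
  have hbf : b ≠ f := Finset.ne_of_mem_erase hbAf
  -- insert f ((Ie.erase f).erase b) = Ie.erase b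
  have hins : insert f ((Ie.erase f).erase b) = Ie.erase b := by
    rw [Finset.erase_right_comm, Finset.insert_erase
      (Finset.mem_erase.mpr ⟨fun h => hbf h.symm, hfIe⟩)]
  rw [hins] at hex
  -- convert the exchange inequality to pw
  have hbBf : b ∉ B.erase f := fun h => hbB (Finset.mem_of_mem_erase h)
  have hsum1 : ∑ x ∈ insert b (B.erase f), w x = (∑ x ∈ B, w x) - w f + w b := by
    rw [Finset.sum_insert hbBf]
    have := Finset.sum_erase_add B w hfB
    linarith
  have hsum2 : ∑ x ∈ Ie.erase b, w x = S - w b := by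
    have := Finset.sum_erase_add Ie w hbIe
    linarith
  have hsum3 : ∑ x ∈ Ie.erase f, w x = S - w f := by
    have := Finset.sum_erase_add Ie w hfIe
    linarith
  have hexw : M.pw w (insert b (B.erase f)) + M.pw w (Ie.erase b)
      ≤ M.pw w B + M.pw w (Ie.erase f) := by
    simp only [ValuatedMatroid.pw, hsum1, hsum2, hsum3]
    rw [addShuffle, addShuffle]
    rw [show (-((∑ x ∈ B, w x) - w f + w b) + -(S - w b)) = (-(∑ x ∈ B, w x) + -(S - w f))
      from by ring]
    exact add_le_add_left hex _
  -- pw B is finite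
  have hpwB'ne : M.pw w B' ≠ ⊤ := by
    rw [ValuatedMatroid.pw, ← hc, ← WithTop.coe_add]
    exact WithTop.coe_ne_top
  have hpwB : M.pw w B ≠ ⊤ := fun h =>
    hpwB'ne (top_le_iff.mp (h ▸ hBmin ▸ minVal_le M w B'))
  -- pw (Ie.erase f) is finite
  have hpwAf : M.pw w (Ie.erase f) ≠ ⊤ := by
    rw [ValuatedMatroid.pw]
    intro h
    exact hpAf (by simpa using WithTop.add_eq_top.mp h)
  -- strict inequality: pw (Ie.erase f) < pw (Ie.erase b)
  have hbninit : b ∉ initSet H w := fun h => hbB (hsub h)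
  obtain ⟨e'', he''⟩ : ∃ e'', H e'' + (w e'' : WithTop ℝ) < H b + (w b : WithTop ℝ) := by
    simp only [initSet, Set.mem_setOf_eq, not_forall, not_le] at hbninit
    exact hbninit
  have hstrictHw : H f + (w f : WithTop ℝ) < H b + (w b : WithTop ℝ) :=
    lt_of_le_of_lt (hfmin' e'') he''
  have hstrict : M.pw w (Ie.erase f) < M.pw w (Ie.erase b) := by
    rw [htrans f hfIe, htrans b hbIe] at hstrictHw
    exact (WithTop.add_lt_add_iff_right WithTop.coe_ne_top).mp hstrictHw
  -- final contradiction
  have h1 : M.pw w B ≤ M.pw w (insert b (B.erase f)) :=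
    hBmin ▸ minVal_le M w _
  have : M.pw w B + M.pw w (Ie.erase f) < M.pw w B + M.pw w (Ie.erase f) :=
    calc M.pw w B + M.pw w (Ie.erase f)
        < M.pw w B + M.pw w (Ie.erase b) := WithTop.add_lt_add_left hpwB hstrict
      _ ≤ M.pw w (insert b (B.erase f)) + M.pw w (Ie.erase b) := add_le_add_left h1 _
      _ ≤ M.pw w B + M.pw w (Ie.erase f) := hexw
  exact lt_irrefl _ this
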